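/- For every positive even integer n, C(n, n/2)² / C(2n, n) ≤ (4/3)·n^{−1/2}, and for every positive odd integer n, (C(n+1, (n+1)/2)/2)² / C(2n, n) ≤ (4/3)·n^{−1/2}. -/

import Mathlib

open Real

lemma key0 : ∀ m : ℕ, 1 ≤ m →
    3 * (Nat.centralBinom m)^4 * (4*m+2) ≤ 8 * (Nat.centralBinom (2*m))^2 := by
  intro m hm
  induction m, hm using Nat.le_induction with
  | base => decide
  | succ m hm IH =>
    have h1 := Nat.succ_mul_centralBinom_succ m
    have h2 := Nat.succ_mul_centralBinom_succ (2*m)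
    have h3 := Nat.succ_mul_centralBinom_succ (2*m+1)
    have e2 : 2*(m+1) = 2*m+1+1 := by ring
    rw [e2]
    set a := Nat.centralBinom m with ha
    set b := Nat.centralBinom (2*m) with hb
    set c := Nat.centralBinom (m+1) with hc
    set e := Nat.centralBinom (2*m+1) with he
    set d := Nat.centralBinom (2*m+1+1) with hd
    -- cast everything to ℝ
    have h1' : ((m:ℝ)+1)*c = 2*(2*m+1)*a := by exact_mod_cast h1
    have h2' : (2*(m:ℝ)+1)*e = 2*(4*m+1)*b := by
      have : ((2*m+1 : ℕ) : ℝ) * e = ((2*(2*(2*m)+1) : ℕ):ℝ) * b := by exact_mod_cast h2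
      push_cast at this; linarith
    have h3' : (2*(m:ℝ)+2)*d = 2*(4*m+3)*e := by
      have : ((2*m+1+1 : ℕ) : ℝ) * d = ((2*(2*(2*m+1)+1) : ℕ):ℝ) * e := by exact_mod_cast h3
      push_cast at this; linarith
    have IH' : 3*(a:ℝ)^4*(4*m+2) ≤ 8*(b:ℝ)^2 := by exact_mod_cast IH
    have hdb : (2*(m:ℝ)+1)*(2*m+2)*d = 4*(4*m+1)*(4*m+3)*b := by
      linear_combination (2*(m:ℝ)+1) * h3' + 2*(4*(m:ℝ)+3) * h2'
    have ha4 : (0:ℝ) ≤ (a:ℝ)^4 := by positivity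
    have hm' : (1:ℝ) ≤ (m:ℝ) := by exact_mod_cast hm
    have hk0 : (0:ℝ) ≤ (m:ℝ) - 1 := by linarith
    -- coefficient polynomial inequality
    have hpoly : 48*(4*(m:ℝ)+6)*(2*m+1)^6*(2*m+2)^2 ≤
        48*(4*(m:ℝ)+2)*(m+1)^4*(4*m+1)^2*(4*m+3)^2 := by
      nlinarith [pow_nonneg hk0 2, pow_nonneg hk0 3, pow_nonneg hk0 4,
        pow_nonneg hk0 5, pow_nonneg hk0 6, pow_nonneg hk0 7, hk0]
    have goalR : (3:ℝ) * (c:ℝ)^4 * (4*(m+1)+2) ≤ 8 * (d:ℝ)^2 := by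
      have hK : (0:ℝ) < ((m:ℝ)+1)^4*((2*m+1)^2*(2*m+2)^2) := by positivity
      rw [← mul_le_mul_iff_right₀ hK]
      calc ((m:ℝ)+1)^4*((2*m+1)^2*(2*m+2)^2) * (3 * (c:ℝ)^4 * (4*(m+1)+2))
          = 3*(4*(m:ℝ)+6)*(2*m+1)^2*(2*m+2)^2*(((m:ℝ)+1)*c)^4 := by ring
        _ = 3*(4*(m:ℝ)+6)*(2*m+1)^2*(2*m+2)^2*(2*(2*(m:ℝ)+1)*a)^4 := by rw [h1']
        _ = (48*(4*(m:ℝ)+6)*(2*m+1)^6*(2*m+2)^2)*(a:ℝ)^4 := by ring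
        _ ≤ (48*(4*(m:ℝ)+2)*(m+1)^4*(4*m+1)^2*(4*m+3)^2)*(a:ℝ)^4 :=
            mul_le_mul_of_nonneg_right hpoly ha4
        _ = 16*((m:ℝ)+1)^4*(4*m+1)^2*(4*m+3)^2*(3*(a:ℝ)^4*(4*m+2)) := by ring
        _ ≤ 16*((m:ℝ)+1)^4*(4*m+1)^2*(4*m+3)^2*(8*(b:ℝ)^2) :=
            mul_le_mul_of_nonneg_left IH' (by positivity)
        _ = 8*((m:ℝ)+1)^4*((4*(4*(m:ℝ)+1)*(4*m+3))*b)^2 := by ring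
        _ = 8*((m:ℝ)+1)^4*((2*(m:ℝ)+1)*(2*m+2)*d)^2 := by rw [hdb]
        _ = ((m:ℝ)+1)^4*((2*m+1)^2*(2*m+2)^2) * (8 * (d:ℝ)^2) := by ring
    exact_mod_cast goalR

lemma sq_le_helper {u v : ℝ} (hv : 0 ≤ v) (h : u^2 ≤ v^2) : u ≤ v :=
  le_of_pow_le_pow_left₀ two_ne_zero hv h

theorem stmt19 :
    (∀ n : ℕ, 0 < n → Even n →
      (n.choose (n/2) : ℝ)^2 / ((2*n).choose n : ℝ) ≤ 4/3 * (n : ℝ) ^ (-(1/2) : ℝ)) ∧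
    (∀ n : ℕ, 0 < n → Odd n →
      (((n+1).choose ((n+1)/2) : ℝ) / 2)^2 / ((2*n).choose n : ℝ)
        ≤ 4/3 * (n : ℝ) ^ (-(1/2) : ℝ)) := by
  constructor
  · -- even case
    intro n hn hev
    obtain ⟨r, rfl⟩ := hev
    have h2 : r + r = 2*r := by ring
    rw [h2] at hn ⊢
    have hr : 1 ≤ r := by omega
    have hdiv : 2*r/2 = r := by omega
    rw [hdiv]
    rw [show (2*r).choose r = Nat.centralBinom r from rfl,
        show (2*(2*r)).choose (2*r) = Nat.centralBinom (2*r) from rfl]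
    have hB0' : (0:ℝ) < (Nat.centralBinom (2*r) : ℝ) := by
      exact_mod_cast Nat.centralBinom_pos (2*r)
    have hkey' : 3*(Nat.centralBinom r : ℝ)^4*(4*(r:ℝ)+2) ≤ 8*(Nat.centralBinom (2*r) : ℝ)^2 := by
      exact_mod_cast key0 r hr
    set A := (Nat.centralBinom r : ℝ) with hA
    set B := (Nat.centralBinom (2*r) : ℝ) with hB
    have hA0 : 0 ≤ A := Nat.cast_nonneg _
    have hB0 : (0:ℝ) < B := hB0'
    have hkey : 3*A^4*(4*(r:ℝ)+2) ≤ 8*B^2 := hkey'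
    have hr' : (1:ℝ) ≤ (r:ℝ) := by exact_mod_cast hr
    have hx : ((2*r : ℕ) : ℝ) = 2*(r:ℝ) := by push_cast; ring
    have hxpos : (0:ℝ) < 2*(r:ℝ) := by linarith
    have hrp : ((2*r : ℕ) : ℝ) ^ (-(1/2) : ℝ) = (Real.sqrt (2*(r:ℝ)))⁻¹ := by
      rw [hx, Real.rpow_neg hxpos.le, Real.sqrt_eq_rpow]
    rw [hrp]
    have hs : 0 < Real.sqrt (2*(r:ℝ)) := Real.sqrt_pos.2 hxpos
    apply sq_le_helper (by positivity)
    have hsq : Real.sqrt (2*(r:ℝ)) ^ 2 = 2*(r:ℝ) := Real.sq_sqrt hxpos.le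
    have h1 : (4/3 * (Real.sqrt (2*(r:ℝ)))⁻¹)^2 = 16/(9*(2*(r:ℝ))) := by
      rw [mul_pow, inv_pow, hsq]
      field_simp
      ring
    rw [h1, div_pow, div_le_div_iff₀ (by positivity) (by positivity)]
    have hrA : 0 ≤ (r:ℝ) * A^4 := by positivity
    nlinarith [hkey, hrA, pow_nonneg hA0 4]
  · -- odd case
    intro n hn hodd
    obtain ⟨k, rfl⟩ := hodd
    have hdiv : (2*k+1+1)/2 = k+1 := by omega
    rw [hdiv]
    rw [show (2*k+1+1).choose (k+1) = Nat.centralBinom (k+1) from by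
          rw [show 2*k+1+1 = 2*(k+1) from by ring]; rfl,
        show (2*(2*k+1)).choose (2*k+1) = Nat.centralBinom (2*k+1) from rfl]
    have hD0' : (0:ℝ) < (Nat.centralBinom (2*k+1) : ℝ) := by
      exact_mod_cast Nat.centralBinom_pos (2*k+1)
    have hB0' : (0:ℝ) < (Nat.centralBinom (2*k+2) : ℝ) := by
      exact_mod_cast Nat.centralBinom_pos (2*k+2)
    have hkeyN := key0 (k+1) (by omega)
    rw [show 2*(k+1) = 2*k+2 from by ring] at hkeyN
    have hkey' : 3*(Nat.centralBinom (k+1) : ℝ)^4*(4*((k:ℝ)+1)+2)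
        ≤ 8*(Nat.centralBinom (2*k+2) : ℝ)^2 := by exact_mod_cast hkeyN
    set A := (Nat.centralBinom (k+1) : ℝ) with hA
    set D := (Nat.centralBinom (2*k+1) : ℝ) with hD
    set B := (Nat.centralBinom (2*k+2) : ℝ) with hB
    have hA0 : 0 ≤ A := Nat.cast_nonneg _
    have hD0 : (0:ℝ) < D := hD0'
    have hB0 : (0:ℝ) < B := hB0'
    have hkey : 3*A^4*(4*((k:ℝ)+1)+2) ≤ 8*B^2 := hkey'
    have hrel := Nat.succ_mul_centralBinom_succ (2*k+1)
    have hrel' : (2*(k:ℝ)+2)*B = 2*(4*(k:ℝ)+3)*D := by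
      have : ((2*k+1+1 : ℕ) : ℝ) * B = ((2*(2*(2*k+1)+1) : ℕ):ℝ) * D := by
        rw [hB, hD]
        exact_mod_cast hrel
      push_cast at this; linarith
    have hk0 : (0:ℝ) ≤ (k:ℝ) := Nat.cast_nonneg _
    have hx : ((2*k+1 : ℕ) : ℝ) = 2*(k:ℝ)+1 := by push_cast; ring
    have hxpos : (0:ℝ) < 2*(k:ℝ)+1 := by linarith
    have hrp : ((2*k+1 : ℕ) : ℝ) ^ (-(1/2) : ℝ) = (Real.sqrt (2*(k:ℝ)+1))⁻¹ := by
      rw [hx, Real.rpow_neg hxpos.le, Real.sqrt_eq_rpow]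
    rw [hrp]
    have hs : 0 < Real.sqrt (2*(k:ℝ)+1) := Real.sqrt_pos.2 hxpos
    apply sq_le_helper (by positivity)
    have hsq : Real.sqrt (2*(k:ℝ)+1) ^ 2 = 2*(k:ℝ)+1 := Real.sq_sqrt hxpos.le
    have h1 : (4/3 * (Real.sqrt (2*(k:ℝ)+1))⁻¹)^2 = 16/(9*(2*(k:ℝ)+1)) := by
      rw [mul_pow, inv_pow, hsq]
      field_simp
      ring
    rw [h1, div_pow, div_le_div_iff₀ (by positivity) (by positivity)]
    -- goal : ((A/2)^2)^2 * (9*(2k+1)) ≤ 16 * D^2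
    have hrel2 : (2*(k:ℝ)+2)^2*B^2 = 4*(4*(k:ℝ)+3)^2*D^2 := by
      linear_combination ((2*(k:ℝ)+2)*B + 2*(4*(k:ℝ)+3)*D) * hrel'
    have H : 9*(2*(k:ℝ)+1)*(4*(k:ℝ)+3)^2*A^4 ≤ 256*((k:ℝ)+1)^2*B^2 := by
      nlinarith [mul_le_mul_of_nonneg_left hkey (sq_nonneg ((k:ℝ)+1)),
        mul_nonneg hk0 (pow_nonneg hA0 4),
        mul_nonneg (mul_nonneg hk0 hk0) (pow_nonneg hA0 4),
        mul_nonneg (mul_nonneg (mul_nonneg hk0 hk0) hk0) (pow_nonneg hA0 4),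
        pow_nonneg hA0 4]
    have H2 : 9*(2*(k:ℝ)+1)*A^4 ≤ 256*D^2 := by
      have hpos : (0:ℝ) < 4*(4*(k:ℝ)+3)^2 := by positivity
      rw [← mul_le_mul_iff_right₀ hpos]
      calc 4*(4*(k:ℝ)+3)^2 * (9*(2*(k:ℝ)+1)*A^4)
          = 4*(9*(2*(k:ℝ)+1)*(4*(k:ℝ)+3)^2*A^4) := by ring
        _ ≤ 4*(256*((k:ℝ)+1)^2*B^2) := by linarith [H]
        _ = 256*((2*(k:ℝ)+2)^2*B^2) := by ring
        _ = 256*(4*(4*(k:ℝ)+3)^2*D^2) := by rw [hrel2]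
        _ = 4*(4*(k:ℝ)+3)^2*(256*D^2) := by ring
    calc ((A/2)^2)^2*(9*(2*(k:ℝ)+1)) = (9*(2*(k:ℝ)+1)*A^4)/16 := by ring
      _ ≤ (256*D^2)/16 := by linarith
      _ = 16*D^2 := by ring
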